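/- Let X and Y be finite sets, let p_Ts and s be probability mass functions on X × Y with s(x,y) > 0 whenever p_Ts(x,y) > 0, let β ∈ [0,1], and form the training distribution p_Tr(x,y) = (1−β)·p_Ts(x,y) + β·s(x,y). Assume perfect model training, i.e., the model's predictive conditional distribution is q(y|x) = p_Tr(x,y)/p_Tr(x) where p_Tr(x) = Σ_y p_Tr(x,y). Then the test log-loss L = −Σ_{(x,y)} p_Ts(x,y)·log q(y|x) satisfies L − H( p_Ts(y|x) ) ≤ β·KL( p_Ts(x,y) ‖ s(x,y) ), where H( p_Ts(y|x) ) = −Σ_{(x,y)} p_Ts(x,y)·log( p_Ts(x,y)/p_Ts(x) ) is the conditional entropy of the test distribution and KL( p_Ts(x,y) ‖ s(x,y) ) = Σ_{(x,y)} p_Ts(x,y)·log( p_Ts(x,y)/s(x,y) ). In particular, the excess loss over the intrinsic error is bounded above by a monotone non-decreasing function of the dissimilarity proportion β. -/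

import Mathlib

open Real Finset

lemma log_concave_mix {a b β : ℝ} (ha : 0 < a) (hb : 0 < b) (h0 : 0 ≤ β) (h1 : β ≤ 1) :
    (1 - β) * Real.log a + β * Real.log b ≤ Real.log ((1 - β) * a + β * b) := by
  have := strictConcaveOn_log_Ioi.concaveOn.2 (Set.mem_Ioi.mpr ha) (Set.mem_Ioi.mpr hb)
    (by linarith : (0:ℝ) ≤ 1 - β) h0 (by ring)
  simpa using this


/-- training distribution shift upper bound: with test pmf `p_Ts`, a
dissimilar pmf `s` (positive on the support of `p_Ts`), mixing proportion `β ∈ [0,1]`,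
training pmf `p_Tr = (1−β)p_Ts + βs`, and perfect training
(`q(y|x) = p_Tr(x,y)/p_Tr(x)`), the test log-loss `L` satisfies
`L − H(p_Ts(y|x)) ≤ β·KL(p_Ts ‖ s)`; in particular the upper bound
`β ↦ β·KL(p_Ts ‖ s)` is monotone non-decreasing in `β` on `[0,1]`. -/
theorem stmt_11 {X Y : Type*} [Fintype X] [Fintype Y]
    (pTs s : X → Y → ℝ)
    (hp0 : ∀ x y, 0 ≤ pTs x y) (hp1 : ∑ x, ∑ y, pTs x y = 1)
    (hs0 : ∀ x y, 0 ≤ s x y) (hs1 : ∑ x, ∑ y, s x y = 1)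
    (hsp : ∀ x y, 0 < pTs x y → 0 < s x y)
    (β : ℝ) (hβ : β ∈ Set.Icc (0 : ℝ) 1) :
    let pTr : X → Y → ℝ := fun x y => (1 - β) * pTs x y + β * s x y
    let L : ℝ := -∑ x, ∑ y, pTs x y * Real.log (pTr x y / ∑ y', pTr x y')
    let H : ℝ := -∑ x, ∑ y, pTs x y * Real.log (pTs x y / ∑ y', pTs x y')
    let KL : ℝ := ∑ x, ∑ y, pTs x y * Real.log (pTs x y / s x y)
    L - H ≤ β * KL ∧ MonotoneOn (fun b : ℝ => b * KL) (Set.Icc (0 : ℝ) 1) := by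
  intro pTr L H KL
  obtain ⟨hβ0, hβ1⟩ := hβ
  -- KL ≥ 0 (Gibbs)
  have hKL0 : 0 ≤ KL := by
    have hterm : ∀ x y, pTs x y - s x y ≤ pTs x y * Real.log (pTs x y / s x y) := by
      intro x y
      rcases eq_or_lt_of_le (hp0 x y) with h | h
      · simp only [← h, zero_mul, zero_sub, neg_nonpos]
        exact hs0 x y
      · have hs' := hsp x y h
        have hlog : Real.log (s x y / pTs x y) ≤ s x y / pTs x y - 1 :=
          Real.log_le_sub_one_of_pos (div_pos hs' h)
        have heq : Real.log (pTs x y / s x y) = - Real.log (s x y / pTs x y) := by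
          rw [← Real.log_inv]
          congr 1
          field_simp
        rw [heq]
        have h2 : pTs x y * Real.log (s x y / pTs x y) ≤ pTs x y * (s x y / pTs x y - 1) :=
          mul_le_mul_of_nonneg_left hlog h.le
        have h3 : pTs x y * (s x y / pTs x y - 1) = s x y - pTs x y := by
          field_simp
        nlinarith
    have h1 : ∑ x, ∑ y, (pTs x y - s x y) ≤ KL := by
      refine Finset.sum_le_sum fun x _ => Finset.sum_le_sum fun y _ => hterm x y
    have h2 : ∑ x, ∑ y, (pTs x y - s x y) = 0 := by
      have : ∑ x, ∑ y, (pTs x y - s x y)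
          = (∑ x, ∑ y, pTs x y) - (∑ x, ∑ y, s x y) := by
        simp [Finset.sum_sub_distrib]
      rw [this, hp1, hs1]; ring
    linarith
  refine ⟨?_, fun a _ b _ hab => mul_le_mul_of_nonneg_right hab hKL0⟩
  -- main inequality
  have hpTr0 : ∀ x y, 0 ≤ pTr x y := fun x y => by
    have := hp0 x y; have := hs0 x y
    simp only [pTr]
    nlinarith
  -- per-x key bound
  have key : ∀ x : X,
      (∑ y, pTs x y * Real.log (pTs x y / ∑ y', pTs x y'))
      - (∑ y, pTs x y * Real.log (pTr x y / ∑ y', pTr x y'))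
      - β * ∑ y, pTs x y * Real.log (pTs x y / s x y)
      ≤ (∑ y, pTr x y) - (∑ y, pTs x y) := by
    intro x
    set P := ∑ y', pTs x y' with hP
    set R := ∑ y', pTr x y' with hR
    have hR0 : 0 ≤ R := Finset.sum_nonneg fun y _ => hpTr0 x y
    rcases eq_or_lt_of_le (Finset.sum_nonneg fun y _ => hp0 x y : (0:ℝ) ≤ P) with hP0 | hP0
    · -- P = 0 : all pTs x y = 0
      have hz : ∀ y, pTs x y = 0 := by
        intro y
        have := (Finset.sum_eq_zero_iff_of_nonneg (fun y _ => hp0 x y)).1 hP0.symm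
        exact this y (Finset.mem_univ y)
      simp [hz]
      linarith
    · -- P > 0
      have hyex : ∃ y, 0 < pTs x y := by
        by_contra hcon
        push_neg at hcon
        have : P = 0 := Finset.sum_eq_zero fun y _ => le_antisymm (hcon y) (hp0 x y)
        linarith
      obtain ⟨y₀, hy₀⟩ := hyex
      have hTr₀ : 0 < pTr x y₀ := by
        have hs' := hsp x y₀ hy₀
        simp only [pTr]
        nlinarith [min_le_left (pTs x y₀) (s x y₀), min_le_right (pTs x y₀) (s x y₀),
          lt_min hy₀ hs']
      have hR0' : 0 < R :=
        lt_of_lt_of_le hTr₀ (Finset.single_le_sum (fun y _ => hpTr0 x y) (Finset.mem_univ y₀))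
      -- termwise bound
      have hterm : ∀ y, pTs x y * Real.log (pTs x y / P)
          - pTs x y * Real.log (pTr x y / R)
          - β * (pTs x y * Real.log (pTs x y / s x y))
          ≤ pTs x y * Real.log (R / P) := by
        intro y
        rcases eq_or_lt_of_le (hp0 x y) with h | h
        · simp [← h]
        · have hs' := hsp x y h
          have hTr : 0 < pTr x y := by
            simp only [pTr]
            nlinarith [min_le_left (pTs x y) (s x y), min_le_right (pTs x y) (s x y),
              lt_min h hs']
          have hmix : (1 - β) * Real.log (pTs x y) + β * Real.log (s x y)
              ≤ Real.log (pTr x y) := log_concave_mix h hs' hβ0 hβ1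
          rw [Real.log_div h.ne' hP0.ne', Real.log_div hTr.ne' hR0'.ne',
            Real.log_div h.ne' hs'.ne', Real.log_div hR0'.ne' hP0.ne']
          nlinarith [h.le]
      have hsum : ∑ y, (pTs x y * Real.log (pTs x y / P)
          - pTs x y * Real.log (pTr x y / R)
          - β * (pTs x y * Real.log (pTs x y / s x y)))
          ≤ ∑ y, pTs x y * Real.log (R / P) :=
        Finset.sum_le_sum fun y _ => hterm y
      have hsum2 : ∑ y, pTs x y * Real.log (R / P) = P * Real.log (R / P) := by
        rw [← Finset.sum_mul]
      have hfinal : P * Real.log (R / P) ≤ R - P := by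
        have hlog : Real.log (R / P) ≤ R / P - 1 :=
          Real.log_le_sub_one_of_pos (div_pos hR0' hP0)
        have h2 : P * Real.log (R / P) ≤ P * (R / P - 1) :=
          mul_le_mul_of_nonneg_left hlog hP0.le
        have h3 : P * (R / P - 1) = R - P := by have hPne : P ≠ 0 := hP0.ne'; field_simp
        linarith
      have hexp : ∑ y, (pTs x y * Real.log (pTs x y / P)
          - pTs x y * Real.log (pTr x y / R)
          - β * (pTs x y * Real.log (pTs x y / s x y)))
          = (∑ y, pTs x y * Real.log (pTs x y / P))
          - (∑ y, pTs x y * Real.log (pTr x y / R))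
          - β * ∑ y, pTs x y * Real.log (pTs x y / s x y) := by
        rw [Finset.mul_sum]
        simp [Finset.sum_sub_distrib]
      linarith [hsum.trans_eq hsum2 |>.trans hfinal, hexp ▸ (hsum.trans_eq hsum2 |>.trans hfinal)]
  -- sum up
  have hsumkey : ∑ x, ((∑ y, pTs x y * Real.log (pTs x y / ∑ y', pTs x y'))
      - (∑ y, pTs x y * Real.log (pTr x y / ∑ y', pTr x y'))
      - β * ∑ y, pTs x y * Real.log (pTs x y / s x y))
      ≤ ∑ x, ((∑ y, pTr x y) - (∑ y, pTs x y)) :=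
    Finset.sum_le_sum fun x _ => key x
  have hTr1 : ∑ x, ∑ y, pTr x y = 1 := by
    have : ∑ x, ∑ y, pTr x y
        = (1 - β) * (∑ x, ∑ y, pTs x y) + β * (∑ x, ∑ y, s x y) := by
      simp [pTr, Finset.sum_add_distrib, Finset.mul_sum]
    rw [this, hp1, hs1]; ring
  have hrhs : ∑ x, ((∑ y, pTr x y) - (∑ y, pTs x y)) = 0 := by
    rw [Finset.sum_sub_distrib, hTr1, hp1]; ring
  have hlhs : ∑ x, ((∑ y, pTs x y * Real.log (pTs x y / ∑ y', pTs x y'))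
      - (∑ y, pTs x y * Real.log (pTr x y / ∑ y', pTr x y'))
      - β * ∑ y, pTs x y * Real.log (pTs x y / s x y))
      = (-H) - (-L) - β * KL := by
    simp only [L, H, KL, neg_neg, Finset.mul_sum]
    rw [Finset.sum_sub_distrib, Finset.sum_sub_distrib]
  rw [hrhs, hlhs] at hsumkey
  linarith
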